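/- arXiv:1508.05363 — 8 statements merged into one kernel-verified Lean document; each statement's English description precedes it below -/
import Mathlib

section
/- With the Arnoux–Yoccoz interval exchange IE of genus g ≥ 2 and the renormalizing map ψ(s) = fract(α⁻¹ s + (α⁻¹ − 1)/2): for every s ∈ [0, α), if IE(s) ≥ α then ψ(s) = α⁻¹·IE(s) − 1. -/
/-- The partial sum `α + α² + ⋯ + α^k`.  The interval `J_k` of the Arnoux–Yoccoz
partition of `[0,1)` is `[aySum α (k-1), aySum α k)`. -/
noncomputable def aySum (α : ℝ) (k : ℕ) : ℝ := ∑ j ∈ Finset.Icc 1 k, α ^ j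

/-- The index `k ≥ 1` such that `t` lies in `J_k = [aySum α (k-1), aySum α k)`
(the least `k` with `t < aySum α k`). -/
noncomputable def ayIdx (α : ℝ) (t : ℝ) : ℕ := sInf {k : ℕ | t < aySum α k}

/-- The first involution `I₁`, rotating each interval `J_k` halfway around:
`I₁ t = t + α^k/2` if this value lies in `J_k`, and `t - α^k/2` otherwise,
where `k` is the index with `t ∈ J_k`. -/
noncomputable def ayI1 (α : ℝ) (t : ℝ) : ℝ :=
  if t + α ^ ayIdx α t / 2 ∈ Set.Ico (aySum α (ayIdx α t - 1)) (aySum α (ayIdx α t)) then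
    t + α ^ ayIdx α t / 2
  else
    t - α ^ ayIdx α t / 2

/-- The second involution `I₂ : t ↦ t + 1/2 (mod 1)`, rotating `[0,1)` halfway around. -/
noncomputable def ayI2 (t : ℝ) : ℝ := Int.fract (t + 1 / 2)

/-- The Arnoux–Yoccoz interval exchange transformation `IE = I₂ ∘ I₁` on `[0,1)`. -/
noncomputable def ayIE (α : ℝ) (t : ℝ) : ℝ := ayI2 (ayI1 α t)


/-- The renormalizing map `ψ(s) = α⁻¹ s + (α⁻¹ − 1)/2 (mod 1)`. -/
noncomputable def ayPsi (α : ℝ) (s : ℝ) : ℝ := Int.fract (α⁻¹ * s + (α⁻¹ - 1) / 2)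

lemma ay_half_lt (g : ℕ) (hg : 2 ≤ g) (α : ℝ) (hα0 : 0 < α)
    (hsum : ∑ k ∈ Finset.Icc 1 g, α ^ k = 1) : 1 / 2 < α := by
  have key : ∀ n : ℕ, (1 - α) * (∑ k ∈ Finset.Icc 1 n, α ^ k) = α - α ^ (n + 1) := by
    intro n
    induction n with
    | zero => simp
    | succ m ih =>
      rw [Finset.sum_Icc_succ_top (by omega : 1 ≤ m + 1), mul_add, ih]
      ring
  have h := key g
  rw [hsum] at h
  have hp : 0 < α ^ (g + 1) := pow_pos hα0 _
  linarith

/-- For `s ∈ [0, α)`, if `IE(s) ≥ α` then `ψ(s) = α⁻¹·IE(s) − 1`. -/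
theorem ayPsi_eq_of_alpha_le_ayIE (g : ℕ) (hg : 2 ≤ g) (α : ℝ) (hα0 : 0 < α) (hα1 : α < 1)
    (hsum : ∑ k ∈ Finset.Icc 1 g, α ^ k = 1)
    (s : ℝ) (hs : s ∈ Set.Ico (0 : ℝ) α) (hIE : α ≤ ayIE α s) :
    ayPsi α s = α⁻¹ * ayIE α s - 1 := by
  obtain ⟨hs0, hsα⟩ := hs
  have hhalf : 1 / 2 < α := ay_half_lt g hg α hα0 hsum
  have hinv : α⁻¹ * α = 1 := inv_mul_cancel₀ hα0.ne'
  have hinvpos : 0 < α⁻¹ := inv_pos.mpr hα0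
  have hsum0 : aySum α 0 = 0 := by simp [aySum]
  have hsum1 : aySum α 1 = α := by simp [aySum]
  have hmem1 : (1 : ℕ) ∈ {k : ℕ | s < aySum α k} := by
    simpa [Set.mem_setOf_eq, hsum1] using hsα
  have hidx : ayIdx α s = 1 := by
    refine le_antisymm (Nat.sInf_le hmem1) ?_
    rcases Nat.eq_zero_or_pos (ayIdx α s) with h | h
    · exfalso
      have hmem := Nat.sInf_mem (⟨1, hmem1⟩ : {k : ℕ | s < aySum α k}.Nonempty)
      rw [show sInf {k : ℕ | s < aySum α k} = ayIdx α s from rfl, h] at hmem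
      simp only [Set.mem_setOf_eq, hsum0] at hmem
      linarith
    · exact h
  have hI1 : ayI1 α s = if s + α / 2 < α then s + α / 2 else s - α / 2 := by
    rw [ayI1, hidx]
    simp only [pow_one, hsum0, hsum1, Set.mem_Ico]
    by_cases hc : s + α / 2 < α
    · rw [if_pos ⟨by linarith, hc⟩, if_pos hc]
    · rw [if_neg (by intro h; exact hc h.2), if_neg hc]
  by_cases hc : s + α / 2 < α
  · have ht : ayI1 α s = s + α / 2 := by rw [hI1, if_pos hc]
    by_cases hh : s + α / 2 < 1 / 2
    · have hIEeq : ayIE α s = s + α / 2 + 1 / 2 := by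
        rw [ayIE, ht, ayI2]
        exact Int.fract_eq_self.mpr ⟨by linarith, by linarith⟩
      rw [hIEeq] at hIE ⊢
      rw [ayPsi, Int.fract_eq_iff]
      refine ⟨?_, ?_, 0, ?_⟩
      · nlinarith
      · nlinarith
      · push_cast
        field_simp
        ring
    · exfalso
      have hIEeq : ayIE α s = s + α / 2 - 1 / 2 := by
        rw [ayIE, ht, ayI2, Int.fract_eq_iff]
        exact ⟨by linarith, by linarith, 1, by push_cast; ring⟩
      rw [hIEeq] at hIE
      linarith
  · have ht : ayI1 α s = s - α / 2 := by rw [hI1, if_neg hc]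
    push_neg at hc
    have hIEeq : ayIE α s = s - α / 2 + 1 / 2 := by
      rw [ayIE, ht, ayI2]
      exact Int.fract_eq_self.mpr ⟨by linarith, by linarith⟩
    rw [hIEeq] at hIE ⊢
    rw [ayPsi, Int.fract_eq_iff]
    refine ⟨?_, ?_, 1, ?_⟩
    · nlinarith
    · nlinarith
    · push_cast
      field_simp
      ring
end

section
/- With the Arnoux–Yoccoz interval exchange IE of genus g ≥ 2 and the renormalizing map ψ(s) = fract(α⁻¹ s + (α⁻¹ − 1)/2): for every s ∈ [0, α), if IE(s) < α then ψ(s) lies in the interval J_g = [1 − α^g, 1) and IE(ψ(s)) = ψ(IE(s)). -/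
set_option maxHeartbeats 1000000


lemma aySum_zero (α : ℝ) : aySum α 0 = 0 := by simp [aySum]

lemma aySum_one (α : ℝ) : aySum α 1 = α := by simp [aySum]

lemma aySum_succ (α : ℝ) (n : ℕ) : aySum α (n + 1) = aySum α n + α ^ (n + 1) := by
  simp [aySum, Finset.sum_Icc_succ_top (Nat.le_add_left 1 n)]

lemma aySum_mono {α : ℝ} (hα : 0 ≤ α) {k m : ℕ} (h : k ≤ m) : aySum α k ≤ aySum α m :=
  Finset.sum_le_sum_of_subset_of_nonneg (Finset.Icc_subset_Icc_right h)
    (fun i _ _ => pow_nonneg hα i)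

lemma aySum_geom (α : ℝ) (n : ℕ) : (1 - α) * aySum α n = α - α ^ (n + 1) := by
  induction n with
  | zero => simp [aySum_zero]
  | succ n ih => rw [aySum_succ, mul_add, ih]; ring

lemma ayIdx_eq (α t : ℝ) (g : ℕ) (h2 : t < aySum α g)
    (h1 : ∀ k < g, ¬ t < aySum α k) : ayIdx α t = g := by
  have hmem : g ∈ {k : ℕ | t < aySum α k} := h2
  refine le_antisymm (Nat.sInf_le hmem) ?_
  by_contra h
  push_neg at h
  exact h1 _ h (Nat.sInf_mem ⟨g, hmem⟩)

lemma fract_eq_sub_one {x : ℝ} (h1 : 1 ≤ x) (h2 : x < 2) : Int.fract x = x - 1 := by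
  have h3 : Int.fract (x - 1 + 1) = Int.fract (x - 1) := Int.fract_add_one _
  have h4 : Int.fract (x - 1) = x - 1 := Int.fract_eq_self.mpr ⟨by linarith, by linarith⟩
  have hx : x - 1 + 1 = x := by ring
  rw [hx] at h3
  rw [h3, h4]

/-- For `s ∈ [0, α)`, if `IE(s) < α` then `ψ(s)` lies in `J_g = [1 − α^g, 1)`
and `IE(ψ(s)) = ψ(IE(s))`. -/
theorem ayPsi_mem_J_g_and_commutes (g : ℕ) (hg : 2 ≤ g) (α : ℝ) (hα0 : 0 < α) (hα1 : α < 1)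
    (hsum : ∑ k ∈ Finset.Icc 1 g, α ^ k = 1)
    (s : ℝ) (hs : s ∈ Set.Ico (0 : ℝ) α) (hIE : ayIE α s < α) :
    ayPsi α s ∈ Set.Ico (1 - α ^ g) 1 ∧ ayIE α (ayPsi α s) = ayPsi α (ayIE α s) := by
  obtain ⟨hs0, hsα⟩ := hs
  have hsum' : aySum α g = 1 := hsum
  -- α^(g+1) = 2α - 1
  have hpow : α ^ (g + 1) = 2 * α - 1 := by
    have h := aySum_geom α g
    rw [hsum'] at h; linarith
  have hα2 : (1 : ℝ) / 2 < α := by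
    have := pow_pos hα0 (g + 1)
    linarith [hpow]
  have hα3 : α < 2 / 3 := by
    have hle : α ^ (g + 1) ≤ α ^ 3 :=
      pow_le_pow_of_le_one hα0.le hα1.le (by omega)
    by_contra h
    push_neg at h
    nlinarith [mul_pos (show (0:ℝ) < 1 - α by linarith)
      (show (0:ℝ) < α ^ 2 + α - 1 by nlinarith)]
  have hne : α ≠ 0 := ne_of_gt hα0
  have hai : α * α⁻¹ = 1 := mul_inv_cancel₀ hne
  have hai0 : 0 < α⁻¹ := inv_pos.mpr hα0
  have hai1 : 1 < α⁻¹ := by nlinarith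
  have haiu : α⁻¹ < 2 := by nlinarith
  have hail : 3 / 2 < α⁻¹ := by nlinarith
  have he1 : α⁻¹ * ((1 - α) / 2) = (α⁻¹ - 1) / 2 := by linear_combination (-(1:ℝ)/2) * hai
  have he2 : α⁻¹ * (α / 2) = 1 / 2 := by linear_combination ((1:ℝ)/2) * hai
  have he3 : α⁻¹ * ((3 * α - 1) / 2) = (3 - α⁻¹) / 2 := by linear_combination ((3:ℝ)/2) * hai
  -- α^g = 2 - α⁻¹
  have hgpow : α ^ g = 2 - α⁻¹ := by
    have h1 : α ^ (g + 1) = α ^ g * α := by ring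
    have h2 : α ^ g * α = 2 * α - 1 := by rw [← h1, hpow]
    field_simp
    linarith
  have hg1 : g - 1 + 1 = g := by omega
  have hgs : aySum α (g - 1) = 1 - α ^ g := by
    have h := aySum_succ α (g - 1)
    rw [hg1] at h
    rw [hsum'] at h
    linarith
  -- index of s is 1
  have hidx : ayIdx α s = 1 := by
    refine ayIdx_eq α s 1 (by rw [aySum_one]; exact hsα) ?_
    intro k hk
    interval_cases k
    rw [aySum_zero]
    linarith
  -- helper to compute things on J_g
  have hidxg : ∀ t : ℝ, 1 - α ^ g ≤ t → t < 1 → ayIdx α t = g := by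
    intro t ht1 ht2
    refine ayIdx_eq α t g (by rw [hsum']; exact ht2) ?_
    intro k hk
    have h1 : aySum α k ≤ aySum α (g - 1) := aySum_mono hα0.le (by omega)
    rw [hgs] at h1
    exact not_lt.mpr (le_trans h1 ht1)
  have hgIE : ∀ t : ℝ, 1 - α ^ g ≤ t → t < α⁻¹ / 2 → ayIE α t = t + 1 / 2 - α⁻¹ / 2 := by
    intro t ht1 ht2
    have ht2' : t < 1 := by linarith
    have hi := hidxg t ht1 ht2'
    have hI1 : ayI1 α t = t + α ^ g / 2 := by
      rw [ayI1, hi, hgs, hsum', if_pos]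
      constructor
      · have := pow_pos hα0 g; linarith
      · rw [hgpow]; linarith
    rw [ayIE, hI1, ayI2, hgpow]
    rw [show t + (2 - α⁻¹) / 2 + 1 / 2 = (t + 3 / 2 - α⁻¹ / 2) by ring]
    rw [fract_eq_sub_one (by linarith) (by linarith)]
    ring
  have hgIE' : ∀ t : ℝ, α⁻¹ / 2 ≤ t → t < 1 → ayIE α t = t + α⁻¹ / 2 - 3 / 2 := by
    intro t ht1 ht2
    have ht1' : 1 - α ^ g ≤ t := by rw [hgpow]; linarith
    have hi := hidxg t ht1' ht2
    have hI1 : ayI1 α t = t - α ^ g / 2 := by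
      rw [ayI1, hi, hgs, hsum', if_neg]
      intro hmem
      have := hmem.2
      rw [hgpow] at this
      linarith
    rw [ayIE, hI1, ayI2, hgpow]
    rw [show t - (2 - α⁻¹) / 2 + 1 / 2 = (t + α⁻¹ / 2 - 1 / 2) by ring]
    rw [fract_eq_sub_one (by linarith) (by linarith)]
    ring
  have hmul1 : α⁻¹ * s < α⁻¹ * α := mul_lt_mul_of_pos_left hsα hai0
  have hmuls : 0 ≤ α⁻¹ * s := mul_nonneg hai0.le hs0
  rcases lt_or_ge s (α / 2) with hcase | hcase
  · -- Case 1 : s ∈ [0, α/2), I₁ s = s + α/2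
    have hI1 : ayI1 α s = s + α / 2 := by
      rw [ayI1, hidx]
      simp only [pow_one, Nat.sub_self, aySum_zero, aySum_one]
      rw [if_pos (Set.mem_Ico.mpr ⟨by linarith, by linarith⟩)]
    have hIEval : ayIE α s = ayI2 (s + α / 2) := by rw [ayIE, hI1]
    -- must have s ≥ (1-α)/2, else IE s ≥ (1+α)/2 > α
    have hs2 : (1 - α) / 2 ≤ s := by
      by_contra h
      push_neg at h
      have hf : ayIE α s = s + α / 2 + 1 / 2 := by
        rw [hIEval, ayI2]
        exact Int.fract_eq_self.mpr ⟨by linarith, by linarith⟩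
      rw [hf] at hIE
      linarith
    have hE : ayIE α s = s + α / 2 - 1 / 2 := by
      rw [hIEval, ayI2, show s + α / 2 + 1 / 2 = (s + α / 2 + 1 / 2) by ring]
      rw [fract_eq_sub_one (by linarith) (by linarith)]
      ring
    have hmul2 : α⁻¹ * ((1 - α) / 2) ≤ α⁻¹ * s := mul_le_mul_of_nonneg_left hs2 hai0.le
    have hmul3 : α⁻¹ * s < α⁻¹ * (α / 2) := mul_lt_mul_of_pos_left hcase hai0
    have hP1 : α⁻¹ - 1 ≤ α⁻¹ * s + (α⁻¹ - 1) / 2 := by linarith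
    have hP2 : α⁻¹ * s + (α⁻¹ - 1) / 2 < α⁻¹ / 2 := by linarith
    have hp : ayPsi α s = α⁻¹ * s + (α⁻¹ - 1) / 2 := by
      rw [ayPsi]
      exact Int.fract_eq_self.mpr ⟨by linarith, by linarith⟩
    have hmemJ : ayPsi α s ∈ Set.Ico (1 - α ^ g) 1 := by
      rw [hp, hgpow]
      exact ⟨by linarith, by linarith⟩
    refine ⟨hmemJ, ?_⟩
    rw [hp, hE]
    rw [hgIE _ (by rw [hgpow]; linarith) hP2]
    rw [ayPsi]
    have harg : α⁻¹ * (s + α / 2 - 1 / 2) + (α⁻¹ - 1) / 2 = α⁻¹ * s := by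
      have : α⁻¹ * (s + α / 2 - 1 / 2) = α⁻¹ * s + (α * α⁻¹) / 2 - α⁻¹ / 2 := by ring
      rw [this, hai]; ring
    rw [harg, Int.fract_eq_self.mpr ⟨hmuls, by linarith⟩]
    ring
  · -- Case 2 : s ∈ [α/2, α), I₁ s = s - α/2
    have hI1 : ayI1 α s = s - α / 2 := by
      rw [ayI1, hidx]
      simp only [pow_one, Nat.sub_self, aySum_zero, aySum_one]
      rw [if_neg]
      intro hmem
      have := hmem.2
      linarith
    have hE : ayIE α s = s - α / 2 + 1 / 2 := by
      rw [ayIE, hI1, ayI2]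
      exact Int.fract_eq_self.mpr ⟨by linarith, by linarith⟩
    have hs3 : s < (3 * α - 1) / 2 := by
      rw [hE] at hIE; linarith
    have hmul2 : α⁻¹ * (α / 2) ≤ α⁻¹ * s := mul_le_mul_of_nonneg_left hcase hai0.le
    have hmul3 : α⁻¹ * s < α⁻¹ * ((3 * α - 1) / 2) := mul_lt_mul_of_pos_left hs3 hai0
    have hP1 : α⁻¹ / 2 ≤ α⁻¹ * s + (α⁻¹ - 1) / 2 := by linarith
    have hP2 : α⁻¹ * s + (α⁻¹ - 1) / 2 < 1 := by linarith
    have hp : ayPsi α s = α⁻¹ * s + (α⁻¹ - 1) / 2 := by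
      rw [ayPsi]
      exact Int.fract_eq_self.mpr ⟨by linarith, by linarith⟩
    have hmemJ : ayPsi α s ∈ Set.Ico (1 - α ^ g) 1 := by
      rw [hp, hgpow]
      exact ⟨by linarith, by linarith⟩
    refine ⟨hmemJ, ?_⟩
    rw [hp, hE]
    rw [hgIE' _ hP1 hP2]
    rw [ayPsi]
    have harg : α⁻¹ * (s - α / 2 + 1 / 2) + (α⁻¹ - 1) / 2 = α⁻¹ * s + α⁻¹ - 1 := by
      have : α⁻¹ * (s - α / 2 + 1 / 2) = α⁻¹ * s - (α * α⁻¹) / 2 + α⁻¹ / 2 := by ring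
      rw [this, hai]; ring
    rw [harg]
    rw [fract_eq_sub_one (by linarith) (by linarith)]
    ring
end

section
/- For every integer n ≥ 2, the polynomial g(X) = X^n + X^{n−1} + ⋯ + X − 1 is irreducible over ℚ. -/
open Polynomial

noncomputable def Paux (n : ℕ) : Polynomial ℤ := (∑ k ∈ Finset.Icc 1 n, X ^ k) - 1

lemma Paux_map {R : Type*} [CommRing R] (n : ℕ) :
    (Paux n).map (Int.castRingHom R) = (∑ k ∈ Finset.Icc 1 n, (X : R[X]) ^ k) - 1 := by
  simp [Paux, Polynomial.map_sum]

lemma Paux_eval {R : Type*} [CommRing R] (n : ℕ) (z : R) :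
    ((Paux n).map (Int.castRingHom R)).eval z = (∑ k ∈ Finset.Icc 1 n, z ^ k) - 1 := by
  simp [Paux_map, eval_finset_sum]

lemma Paux_coeff_n (n : ℕ) (hn : 1 ≤ n) : (Paux n).coeff n = 1 := by
  rw [Paux, coeff_sub, Polynomial.finset_sum_coeff]
  simp only [coeff_X_pow]
  rw [Finset.sum_ite_eq (Finset.Icc 1 n) n (fun _ => (1:ℤ))]
  have hmem : n ∈ Finset.Icc 1 n := Finset.mem_Icc.mpr ⟨hn, le_refl n⟩
  rw [if_pos hmem, Polynomial.coeff_one]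
  simp only [if_neg (by omega : ¬ n = 0)]
  ring

lemma Paux_natDegree_le (n : ℕ) : (Paux n).natDegree ≤ n := by
  apply le_trans (natDegree_sub_le _ _)
  simp only [natDegree_one, max_le_iff]
  refine ⟨natDegree_sum_le_of_forall_le _ _ fun k hk => ?_, by omega⟩
  simpa using (Finset.mem_Icc.mp hk).2

lemma Paux_monic (n : ℕ) (hn : 1 ≤ n) : (Paux n).Monic :=
  monic_of_natDegree_le_of_coeff_eq_one n (Paux_natDegree_le n) (Paux_coeff_n n hn)

lemma Paux_natDegree (n : ℕ) (hn : 1 ≤ n) : (Paux n).natDegree = n :=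
  le_antisymm (Paux_natDegree_le n)
    (le_natDegree_of_ne_zero (by rw [Paux_coeff_n n hn]; exact one_ne_zero))

lemma sumPow_strictMonoOn (n : ℕ) (hn : 1 ≤ n) :
    StrictMonoOn (fun t : ℝ => ∑ k ∈ Finset.Icc 1 n, t ^ k) (Set.Ici 0) := by
  intro s hs t ht hst
  apply Finset.sum_lt_sum_of_nonempty
  · exact ⟨1, Finset.mem_Icc.mpr ⟨le_refl 1, hn⟩⟩
  · intro k hk
    exact pow_lt_pow_left₀ hst hs (by have := (Finset.mem_Icc.mp hk).1; omega)

lemma exists_rho (n : ℕ) (hn : 2 ≤ n) :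
    ∃ ρ : ℝ, 0 < ρ ∧ ρ < 1 ∧ ∑ k ∈ Finset.Icc 1 n, ρ ^ k = 1 := by
  set f : ℝ → ℝ := fun t => ∑ k ∈ Finset.Icc 1 n, t ^ k with hf
  have hcont : ContinuousOn f (Set.Icc 0 1) :=
    (continuous_finset_sum _ fun k _ => continuous_pow k).continuousOn
  have h0 : f 0 = 0 := by
    apply Finset.sum_eq_zero
    intro k hk
    exact zero_pow (by have := (Finset.mem_Icc.mp hk).1; omega)
  have h1 : f 1 = n := by simp [hf]
  have hmem : (1:ℝ) ∈ Set.Icc (f 0) (f 1) := by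
    rw [h0, h1]
    constructor <;> [norm_num; exact_mod_cast by omega]
  obtain ⟨ρ, hρm, hρ⟩ := intermediate_value_Icc (by norm_num : (0:ℝ) ≤ 1) hcont hmem
  refine ⟨ρ, ?_, ?_, hρ⟩
  · rcases lt_or_eq_of_le hρm.1 with h | h
    · exact h
    · exfalso; rw [← h] at hρ; rw [h0] at hρ; norm_num at hρ
  · rcases lt_or_eq_of_le hρm.2 with h | h
    · exact h
    · exfalso; rw [h] at hρ; rw [h1] at hρ
      have : (n:ℝ) = 1 := hρ
      have : n = 1 := by exact_mod_cast this
      omega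

lemma sum_pow_eq_mul_geom {R : Type*} [CommRing R] (z : R) (n : ℕ) :
    ∑ k ∈ Finset.Icc 1 n, z ^ k = z * ∑ i ∈ Finset.range n, z ^ i := by
  rw [Finset.mul_sum]
  rw [show Finset.Icc 1 n = Finset.Ico 1 (n+1) by rfl]
  rw [Finset.sum_Ico_eq_sum_range]
  apply Finset.sum_congr rfl
  intro i _
  ring

lemma norm_gt_one (n : ℕ) (hn : 2 ≤ n) (ρ : ℝ) (hρ0 : 0 < ρ) (hρ1 : ρ < 1)
    (hρ : ∑ k ∈ Finset.Icc 1 n, ρ ^ k = 1) (w : ℂ)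
    (hw : ∑ k ∈ Finset.Icc 1 n, w ^ k = 1) (hwρ : w ≠ (ρ : ℂ)) :
    1 < ‖w‖ := by
  -- w is not a nonnegative real
  have hxlt : w.re < ‖w‖ := by
    by_cases him : w.im = 0
    · -- w is real; show w.re < 0, else w = ρ contradiction
      have hreal : w = ((w.re : ℝ) : ℂ) := by
        apply Complex.ext <;> simp [him]
      rcases lt_or_ge w.re 0 with hneg | hpos
      · calc w.re < 0 := hneg
          _ ≤ ‖w‖ := norm_nonneg _
      · exfalso
        apply hwρ
        rw [hreal]
        norm_cast
        have hsum : ∑ k ∈ Finset.Icc 1 n, w.re ^ k = 1 := by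
          have : ((∑ k ∈ Finset.Icc 1 n, w.re ^ k : ℝ) : ℂ) = ((1:ℝ):ℂ) := by
            push_cast
            rw [← hw]
            rw [hreal]
            push_cast
            rfl
          exact_mod_cast this
        exact (sumPow_strictMonoOn n (by omega)).injOn hpos (Set.mem_Ici.mpr hρ0.le)
          (by rw [hsum, hρ])
    · calc w.re ≤ |w.re| := le_abs_self _
        _ < ‖w‖ := Complex.abs_re_lt_norm.mpr him
  by_contra hcon
  push_neg at hcon
  set t := ‖w‖ with htdef
  have ht0 : 0 ≤ t := norm_nonneg _
  -- w ≠ 0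
  have hw0 : w ≠ 0 := by
    intro h
    rw [h] at hw
    have : (0:ℂ) = 1 := by
      rw [← hw]
      apply Eq.symm
      apply Finset.sum_eq_zero
      intro k hk
      exact zero_pow (by have := (Finset.mem_Icc.mp hk).1; omega)
    norm_num at this
  have htpos : 0 < t := norm_pos_iff.mpr hw0
  -- w ^ (n+1) = 2w - 1
  have h2 : w ^ (n + 1) = 2 * w - 1 := by
    have h3 := geom_sum_mul w n
    have h4 := sum_pow_eq_mul_geom w n
    rw [h4] at hw
    linear_combination (-w) * h3 + (w - 1) * hw
  set u := t ^ (n + 1) with hudef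
  have hupos : 0 < u := pow_pos htpos _
  have hu : ‖(2 * w - 1)‖ = u := by
    rw [← h2, norm_pow]
  -- square identity
  have hsq : (2 * w.re - 1) ^ 2 + (2 * w.im) ^ 2 = u ^ 2 := by
    have := Complex.sq_norm (2 * w - 1)
    rw [hu] at this
    rw [this, Complex.normSq_apply]
    simp [Complex.sub_re, Complex.sub_im, Complex.mul_re, Complex.mul_im]
    ring
  have ht2 : w.re ^ 2 + w.im ^ 2 = t ^ 2 := by
    have := Complex.sq_norm w
    rw [← htdef] at this
    rw [this, Complex.normSq_apply]
    ring
  -- 1 ≤ G(t)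
  have hG : 1 ≤ ∑ k ∈ Finset.Icc 1 n, t ^ k := by
    calc (1:ℝ) = ‖(1:ℂ)‖ := by simp
      _ = ‖(∑ k ∈ Finset.Icc 1 n, w ^ k)‖ := by rw [hw]
      _ ≤ ∑ k ∈ Finset.Icc 1 n, ‖(w ^ k)‖ := norm_sum_le _ _
      _ = ∑ k ∈ Finset.Icc 1 n, t ^ k := by
          apply Finset.sum_congr rfl
          intro k _
          rw [norm_pow]
  -- real identity
  have hid : (t - 1) * (∑ k ∈ Finset.Icc 1 n, t ^ k) = u - t := by
    have h3 := geom_sum_mul t n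
    have h4 := sum_pow_eq_mul_geom t n
    rw [h4]
    linear_combination t * h3
  set G := ∑ k ∈ Finset.Icc 1 n, t ^ k with hGdef
  -- u^2 = 4t^2 - 4x + 1
  have hu2 : u ^ 2 = 4 * t ^ 2 - 4 * w.re + 1 := by nlinarith [hsq, ht2]
  have hu2gt : (2 * t - 1) ^ 2 < u ^ 2 := by nlinarith [hxlt]
  have hult : 2 * t - 1 < u := by nlinarith [hu2gt, hupos]
  -- contradiction
  nlinarith [hid, hult, hG, hcon, mul_nonneg (by linarith : (0:ℝ) ≤ 1 - t) (by linarith : (0:ℝ) ≤ G - 1)]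

lemma one_lt_multiset_prod (s : Multiset ℝ) (hne : s ≠ 0) (h : ∀ x ∈ s, 1 < x) :
    1 < s.prod := by
  have hle : ∀ t : Multiset ℝ, (∀ x ∈ t, 1 < x) → 1 ≤ t.prod := by
    intro t
    refine Multiset.induction_on t (by simp) ?_
    intro a t ih h
    rw [Multiset.prod_cons]
    have ha := h a (Multiset.mem_cons_self a t)
    have ht := ih fun x hx => h x (Multiset.mem_cons_of_mem hx)
    nlinarith
  obtain ⟨a, ha⟩ := Multiset.exists_mem_of_ne_zero hne
  obtain ⟨t, rfl⟩ := Multiset.exists_cons_of_mem ha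
  rw [Multiset.prod_cons]
  have h1 := h a (Multiset.mem_cons_self a t)
  have h2 := hle t fun x hx => h x (Multiset.mem_cons_of_mem hx)
  nlinarith

lemma key_isUnit (n : ℕ) (hn : 2 ≤ n) (ρ : ℝ) (hρ0 : 0 < ρ) (hρ1 : ρ < 1)
    (hρ : ∑ k ∈ Finset.Icc 1 n, ρ ^ k = 1) (a b : Polynomial ℤ)
    (hab : Paux n = a * b)
    (ha : (a.map (Int.castRingHom ℂ)).eval ((ρ : ℝ) : ℂ) = 0) : IsUnit b := by
  have hP0 : (Paux n).eval 0 = -1 := by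
    rw [Paux]
    simp only [eval_sub, eval_one, eval_finset_sum, eval_pow, eval_X]
    rw [Finset.sum_eq_zero fun k hk => zero_pow
      (by have := (Finset.mem_Icc.mp hk).1; omega : k ≠ 0)]
    ring
  have hev : a.eval 0 * b.eval 0 = -1 := by rw [← eval_mul, ← hab, hP0]
  have hbu : IsUnit (b.eval 0) := by
    apply isUnit_of_mul_isUnit_right (y := b.eval 0) (x := a.eval 0)
    rw [hev]
    exact isUnit_one.neg
  by_cases hdeg : b.natDegree = 0
  · rw [eq_C_of_natDegree_eq_zero hdeg]
    rw [isUnit_C, coeff_zero_eq_eval_zero]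
    exact hbu
  · exfalso
    set f := Int.castRingHom ℂ with hf
    set B := b.map f with hB
    have hBdeg : B.natDegree = b.natDegree := natDegree_map_eq_of_injective Int.cast_injective b
    have hb0 : b ≠ 0 := fun h => hdeg (by rw [h]; simp)
    have hB0 : B ≠ 0 := by
      rw [hB, Ne, Polynomial.map_eq_zero_iff Int.cast_injective]
      exact hb0
    have hsplits : Splits B := IsAlgClosed.splits B
    have hcard : B.roots.card = B.natDegree := splits_iff_card_roots.mp hsplits
    have hroots : ∀ w ∈ B.roots, 1 < ‖w‖ := by
      intro w hwmem
      have hBw : B.eval w = 0 := ((mem_roots'.mp hwmem).2 : IsRoot B w)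
      have hPw : ∑ k ∈ Finset.Icc 1 n, w ^ k = 1 := by
        have hz : ((Paux n).map f).eval w = 0 := by
          rw [hab, Polynomial.map_mul, eval_mul, ← hB, hBw, mul_zero]
        rw [Paux_eval] at hz
        exact sub_eq_zero.mp hz
      apply norm_gt_one n hn ρ hρ0 hρ1 hρ w hPw
      intro hwρ
      -- ρ is a double root: contradiction with the derivative
      have hder : (derivative ((Paux n).map f)).eval ((ρ : ℝ) : ℂ) = 0 := by
        rw [hab, Polynomial.map_mul, derivative_mul, eval_add, eval_mul, eval_mul]
        rw [hwρ] at hBw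
        rw [ha, ← hB, hBw]
        ring
      have hder2 : (derivative ((Paux n).map f)).eval ((ρ : ℝ) : ℂ) =
          ((∑ k ∈ Finset.Icc 1 n, (k : ℝ) * ρ ^ (k - 1) : ℝ) : ℂ) := by
        rw [Paux_map, derivative_sub, derivative_one, sub_zero, derivative_sum]
        simp only [derivative_X_pow]
        rw [eval_finset_sum]
        push_cast
        apply Finset.sum_congr rfl
        intro k hk
        simp
      have hpos : (1 : ℝ) ≤ ∑ k ∈ Finset.Icc 1 n, (k : ℝ) * ρ ^ (k - 1) := by
        have h1mem : 1 ∈ Finset.Icc 1 n := Finset.mem_Icc.mpr ⟨le_refl 1, by omega⟩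
        calc (1 : ℝ) = (1 : ℕ) * ρ ^ (1 - 1) := by norm_num
          _ ≤ ∑ k ∈ Finset.Icc 1 n, (k : ℝ) * ρ ^ (k - 1) :=
            Finset.single_le_sum (f := fun k : ℕ => (k : ℝ) * ρ ^ (k - 1))
              (fun k _ => by positivity) h1mem
      rw [hder2] at hder
      have : (∑ k ∈ Finset.Icc 1 n, (k : ℝ) * ρ ^ (k - 1)) = 0 := by exact_mod_cast hder
      linarith
    -- product of roots
    have hfact := (C_leadingCoeff_mul_prod_multiset_X_sub_C hcard).symm
    have heval0 : B.eval 0 = ((b.eval 0 : ℤ) : ℂ) := by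
      rw [hB, eval_map, eval₂_at_zero, coeff_zero_eq_eval_zero]
      rfl
    have habs0 : ‖(B.eval 0)‖ = 1 := by
      rw [heval0, Complex.norm_intCast]
      rcases Int.isUnit_iff.mp hbu with h | h <;> rw [h] <;> norm_num
    have hlead : 1 ≤ ‖B.leadingCoeff‖ := by
      have hl : B.leadingCoeff = ((b.leadingCoeff : ℤ) : ℂ) := by
        rw [leadingCoeff, hBdeg, hB, coeff_map, leadingCoeff]
        rfl
      rw [hl, Complex.norm_intCast]
      have : b.leadingCoeff ≠ 0 := leadingCoeff_ne_zero.mpr hb0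
      exact_mod_cast Int.one_le_abs this
    have hrne : B.roots ≠ 0 := by
      intro h
      rw [h] at hcard
      simp only [Multiset.card_zero] at hcard
      rw [hBdeg] at hcard
      exact hdeg hcard.symm
    have hprodgt : 1 < (B.roots.map (‖·‖)).prod := by
      apply one_lt_multiset_prod
      · simpa using hrne
      · intro x hx
        obtain ⟨w, hw, rfl⟩ := Multiset.mem_map.mp hx
        exact hroots w hw
    have habsfact : ‖(B.eval 0)‖ =
        ‖B.leadingCoeff‖ * (B.roots.map (‖·‖)).prod := by
      conv_lhs => rw [hfact]
      rw [eval_mul, eval_C, eval_multiset_prod, norm_mul, Multiset.map_map]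
      congr 1
      rw [show ∀ s : Multiset ℂ, ‖s.prod‖ = (s.map (‖·‖)).prod from fun s => map_multiset_prod normHom s, Multiset.map_map]
      congr 1
      ext w
      simp
    have hprodpos : 0 < (B.roots.map (‖·‖)).prod := by linarith
    rw [habsfact] at habs0
    nlinarith

/-- For every integer `n ≥ 2`, the polynomial
`g(X) = X^n + X^{n−1} + ⋯ + X − 1` is irreducible over `ℚ`. -/
theorem irreducible_geom_sum_sub_one (n : ℕ) (hn : 2 ≤ n) :
    Irreducible ((∑ k ∈ Finset.Icc 1 n, (X : ℚ[X]) ^ k) - 1) := by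
  obtain ⟨ρ, hρ0, hρ1, hρ⟩ := exists_rho n hn
  have hmonic := Paux_monic n (by omega)
  rw [← Paux_map (R := ℚ) n]
  rw [← Polynomial.IsPrimitive.Int.irreducible_iff_irreducible_map_cast hmonic.isPrimitive]
  constructor
  · intro hu
    have h := natDegree_eq_zero_of_isUnit hu
    rw [Paux_natDegree n (by omega)] at h
    omega
  · intro a b hab
    have hPρ : ((Paux n).map (Int.castRingHom ℂ)).eval ((ρ : ℝ) : ℂ) = 0 := by
      rw [Paux_eval]
      have hc : ((∑ k ∈ Finset.Icc 1 n, ρ ^ k : ℝ) : ℂ) = 1 := by rw [hρ]; norm_num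
      push_cast at hc
      rw [hc]
      ring
    rw [hab, Polynomial.map_mul, eval_mul] at hPρ
    rcases mul_eq_zero.mp hPρ with h | h
    · exact Or.inr (key_isUnit n hn ρ hρ0 hρ1 hρ a b hab h)
    · exact Or.inl (key_isUnit n hn ρ hρ0 hρ1 hρ b a (by rw [hab, mul_comm]) h)
end

section
/- Cardinality bound for inverse limits of finite sets: let I be a directed partial order, let (A_i)_{i∈I} be a family of finite sets, and for each pair i ≤ j let τ_{ij} : A_j → A_i be maps satisfying τ_{ii} = id and τ_{ik} = τ_{ij} ∘ τ_{jk} whenever i ≤ j ≤ k. Let L = { x ∈ ∏_{i∈I} A_i : τ_{ij}(x_j) = x_i for all i ≤ j } be the inverse limit. Then for every natural number m, if liminf over the atTop filter of I of the function i ↦ card(A_i) is at most m, the set L is finite and has at most m elements. -/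
open Filter

/-- Cardinality bound for inverse limits of finite sets: if `(A_i)_{i ∈ I}` is an
inverse system of finite sets over a directed partial order `I` with transition maps
`τ_{ij} : A_j → A_i` (for `i ≤ j`) satisfying `τ_{ii} = id` and
`τ_{ik} = τ_{ij} ∘ τ_{jk}`, and the `liminf` along `atTop` of `i ↦ card (A_i)`
(in `[0,∞]`) is at most `m`, then the inverse limit is finite with at most `m`
elements. -/
theorem inverseLimit_finite_card_le {I : Type*} [PartialOrder I] [Nonempty I]
    [IsDirected I (· ≤ ·)]
    (A : I → Type*) [∀ i, Finite (A i)]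
    (τ : ∀ ⦃i j : I⦄, i ≤ j → A j → A i)
    (hτ_id : ∀ (i : I) (a : A i), τ (le_refl i) a = a)
    (hτ_comp : ∀ ⦃i j k : I⦄ (hij : i ≤ j) (hjk : j ≤ k) (a : A k),
      τ hij (τ hjk a) = τ (le_trans hij hjk) a)
    (m : ℕ)
    (hlim : liminf (fun i => (Nat.card (A i) : ENNReal)) atTop ≤ (m : ENNReal)) :
    {x : ∀ i, A i | ∀ ⦃i j : I⦄ (h : i ≤ j), τ h (x j) = x i}.Finite ∧
      {x : ∀ i, A i | ∀ ⦃i j : I⦄ (h : i ≤ j), τ h (x j) = x i}.ncard ≤ m := by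

  classical
  set L := {x : ∀ i, A i | ∀ ⦃i j : I⦄ (h : i ≤ j), τ h (x j) = x i} with hLdef
  have key : ∀ s : Finset (∀ i, A i), ↑s ⊆ L → s.card ≤ m := by
    intro s hs
    by_contra hcard
    push_neg at hcard
    have hd : ∀ x y : ∀ i, A i, x ≠ y → ∃ i, x i ≠ y i := fun x y h => Function.ne_iff.mp h
    obtain ⟨d, hdspec⟩ : ∃ d : (∀ i, A i) → (∀ i, A i) → I,
        ∀ x y : ∀ i, A i, x ≠ y → x (d x y) ≠ y (d x y) := by
      refine ⟨fun x y => if h : x ≠ y then (hd x y h).choose else Classical.arbitrary I, ?_⟩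
      intro x y h
      dsimp only
      rw [dif_pos h]
      exact (hd x y h).choose_spec
    obtain ⟨j₀, hj₀⟩ := (Finset.image₂ d s s).exists_le
    have hinj : ∀ j, j₀ ≤ j → ∀ x ∈ s, ∀ y ∈ s, x j = y j → x = y := by
      intro j hj x hx y hy hxy
      by_contra hne
      have hij : d x y ≤ j := le_trans (hj₀ _ (Finset.mem_image₂_of_mem hx hy)) hj
      apply hdspec x y hne
      rw [← hs hx hij, ← hs hy hij, hxy]
    have hcards : ∀ j, j₀ ≤ j → s.card ≤ Nat.card (A j) := by
      intro j hj
      haveI := Fintype.ofFinite (A j)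
      rw [Nat.card_eq_fintype_card, ← Finset.card_univ]
      exact Finset.card_le_card_of_injOn (fun x => x j) (fun x _ => Finset.mem_univ _)
        (fun x hx y hy h => hinj j hj x hx y hy h)
    have hev : ∀ᶠ j in atTop, (s.card : ENNReal) ≤ (Nat.card (A j) : ENNReal) := by
      filter_upwards [Filter.eventually_ge_atTop j₀] with j hj
      exact_mod_cast hcards j hj
    have hle : (s.card : ENNReal) ≤ liminf (fun i => (Nat.card (A i) : ENNReal)) atTop :=
      Filter.le_liminf_of_le (by isBoundedDefault) hev
    have h2 : (s.card : ENNReal) ≤ (m : ENNReal) := hle.trans hlim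
    exact absurd (Nat.cast_le.mp h2) (not_le.mpr hcard)
  have hfin : L.Finite := by
    by_contra hinf
    have hinf' : L.Infinite := hinf
    obtain ⟨s, hsub, hcard⟩ := hinf'.exists_subset_card_eq (m + 1)
    have := key s hsub
    omega
  refine ⟨hfin, ?_⟩
  rw [Set.ncard_eq_toFinset_card L hfin]
  exact key _ (by simp)
end

section
/- Bound on totally-K subextensions (perfect-field case of the main appendix theorem): let E be a perfect field with algebraic closure Ē, let K and F be intermediate fields of Ē/E, and let p be a prime such that p does not divide [F₀ : E] for any finite-dimensional intermediate field F₀ of Ē/E contained in F. Suppose the Galois group Aut(Ē/K) = (Ē ≃ₐ[K] Ē), with its Krull topology, is pro-p, in the sense that every quotient by an open normal subgroup is a p-group. Then for every finite-dimensional intermediate field L of Ē/E with L ≤ F which is totally-K (every E-algebra homomorphism L → Ē has image contained in K), one has, in [0,∞]: [L : E] ≤ liminf, over the directed partial order (under inclusion, with its atTop filter) of finite-dimensional intermediate fields F₀ of Ē/E contained in F, of the number of E-algebra homomorphisms from F₀ to K. -/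
open Filter Polynomial

section Aux
variable {E Ebar : Type*} [Field E] [Field Ebar] [Algebra E Ebar]
    [IsAlgClosure E Ebar] [PerfectField E]

lemma mem_of_fixed (K : IntermediateField E Ebar) (x : Ebar)
    (hx : ∀ g : Ebar ≃ₐ[↥K] Ebar, g x = x) : x ∈ K := by
  haveI : Algebra.IsAlgebraic E Ebar := IsAlgClosure.isAlgebraic
  haveI : IsAlgClosed Ebar := IsAlgClosure.isAlgClosed E
  haveI : Algebra.IsAlgebraic ↥K Ebar := Algebra.IsAlgebraic.tower_top (K := E) ↥K
  haveI : IsAlgClosure ↥K Ebar := ⟨inferInstance, inferInstance⟩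
  haveI : Algebra.IsSeparable ↥K Ebar := Algebra.isSeparable_tower_top_of_isSeparable E ↥K Ebar
  classical
  have hint : IsIntegral ↥K x := Algebra.IsIntegral.isIntegral x
  set q := minpoly ↥K x with hq
  have hsep : q.Separable := Algebra.IsSeparable.isSeparable ↥K x
  by_contra hxK
  have hdeg : 2 ≤ q.natDegree := by
    rcases Nat.lt_or_ge q.natDegree 2 with h | h
    · interval_cases h' : q.natDegree
      · exact absurd h' (minpoly.natDegree_pos hint).ne'
      · exact absurd ((minpoly.natDegree_eq_one_iff).mp h')
          (by rintro ⟨k, rfl⟩; exact hxK (by simp [IntermediateField.algebraMap_apply, k.2]))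
    · exact h
  set R := (q.map (algebraMap ↥K Ebar)).roots with hR
  have hcard : R.card = q.natDegree :=
    by rw [hR, ← (IsAlgClosed.splits (q.map (algebraMap ↥K Ebar))).natDegree_eq_card_roots,
      natDegree_map]
  have hnodup : R.Nodup := Polynomial.nodup_roots (hsep.map (f := algebraMap ↥K Ebar))
  have hxR : x ∈ R := by
    rw [hR, mem_roots']
    exact ⟨Polynomial.map_ne_zero (minpoly.ne_zero hint),
      by rw [IsRoot.def, eval_map, ← aeval_def]; exact minpoly.aeval _ _⟩
  obtain ⟨y, hy⟩ : ∃ y, y ∈ R.erase x := Multiset.exists_mem_of_ne_zero (by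
    have : (R.erase x).card = R.card - 1 := Multiset.card_erase_of_mem hxR
    intro h0; rw [h0] at this; simp at this; omega)
  have hyx : y ≠ x := (hnodup.mem_erase_iff.mp hy).1
  have hyR : y ∈ R := Multiset.mem_of_mem_erase hy
  have hyroot : (Polynomial.aeval y) q = 0 := by
    have := (mem_roots'.mp hyR).2
    rwa [IsRoot.def, eval_map, ← aeval_def] at this
  obtain ⟨σ, hσ⟩ := minpoly.exists_algEquiv_of_root' (x := y) hint.isAlgebraic hyroot
  exact hyx (hσ ▸ hx σ)

lemma card_ext_dvd {E A B C : Type*} [Field E] [Field A] [Field B] [Field C]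
    [Algebra E A] [Algebra E B] [Algebra E C] [IsAlgClosed C]
    [Algebra.IsSeparable E B] [FiniteDimensional E B]
    (i : A →ₐ[E] B) (σ : A →ₐ[E] C) :
    Nat.card {τ : B →ₐ[E] C // τ.comp i = σ} ∣ Module.finrank E B := by
  letI : Algebra A B := i.toRingHom.toAlgebra
  letI : Algebra A C := σ.toRingHom.toAlgebra
  haveI : IsScalarTower E A B :=
    IsScalarTower.of_algebraMap_eq fun a => (i.commutes a).symm
  haveI : FiniteDimensional A B := FiniteDimensional.right E A B
  haveI : Algebra.IsSeparable A B := Algebra.isSeparable_tower_top_of_isSeparable E A B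
  haveI : Algebra.IsAlgebraic A B := Algebra.IsAlgebraic.of_finite A B
  let e : {τ : B →ₐ[E] C // τ.comp i = σ} ≃ (B →ₐ[A] C) :=
    { toFun := fun τ =>
        { toRingHom := τ.1.toRingHom
          commutes' := fun a => AlgHom.congr_fun τ.2 a }
      invFun := fun ρ =>
        ⟨{ toRingHom := ρ.toRingHom
           commutes' := fun x => by
             have h1 : algebraMap E B x = algebraMap A B (algebraMap E A x) :=
               (IsScalarTower.algebraMap_apply E A B x)
             show ρ (algebraMap E B x) = algebraMap E C x
             rw [h1, ρ.commutes]
             exact σ.commutes x },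
         by ext a; exact ρ.commutes a⟩
      left_inv := fun τ => by ext x; rfl
      right_inv := fun ρ => by ext x; rfl }
  rw [Nat.card_congr e, ← Field.finSepDegree_eq_of_isAlgClosed A B C,
    Field.finSepDegree_eq_finrank_of_isSeparable]
  exact Dvd.intro_left (Module.finrank E A) (Module.finrank_mul_finrank E A B)

lemma card_homs_le (K : IntermediateField E Ebar) (p : ℕ) (hp : p.Prime)
    (hpro : ∀ (N : Subgroup (Ebar ≃ₐ[↥K] Ebar)) [N.Normal],
      IsOpen (N : Set (Ebar ≃ₐ[↥K] Ebar)) → IsPGroup p ((Ebar ≃ₐ[↥K] Ebar) ⧸ N))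
    (L F₀ : IntermediateField E Ebar) (hLF₀ : L ≤ F₀) [FiniteDimensional E ↥F₀]
    (hpF₀ : ¬ p ∣ Module.finrank E ↥F₀)
    (hL : ∀ σ : ↥L →ₐ[E] Ebar, ∀ x : ↥L, σ x ∈ K) :
    Nat.card (↥L →ₐ[E] Ebar) ≤ Nat.card (↥F₀ →ₐ[E] ↥K) := by
  classical
  haveI : Fact p.Prime := ⟨hp⟩
  haveI : IsAlgClosed Ebar := IsAlgClosure.isAlgClosed E
  haveI : Algebra.IsAlgebraic E Ebar := IsAlgClosure.isAlgebraic
  haveI : Algebra.IsAlgebraic E ↥F₀ := Algebra.IsAlgebraic.of_finite E ↥F₀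
  haveI : Algebra.IsSeparable E ↥F₀ := inferInstance
  set G := Ebar ≃ₐ[↥K] Ebar
  set incl := IntermediateField.inclusion hLF₀ with hincl
  -- key: every σ has an extension landing in K
  have key : ∀ σ : ↥L →ₐ[E] Ebar, ∃ τ : ↥F₀ →ₐ[E] ↥K,
      (K.val.comp τ).comp incl = σ := by
    intro σ
    set X := {τ : ↥F₀ →ₐ[E] Ebar // τ.comp incl = σ} with hX
    haveI : Finite X := Subtype.finite
    have hfixK : ∀ (g : G) (y : Ebar), y ∈ K → g y = y := by
      intro g y hy
      have := g.commutes ⟨y, hy⟩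
      simpa [IntermediateField.algebraMap_apply] using this
    letI : MulAction G X :=
      { smul := fun g τ => ⟨((g.restrictScalars E : Ebar ≃ₐ[E] Ebar) :
            Ebar →ₐ[E] Ebar).comp τ.1, by
          ext l
          have h1 : τ.1 (incl l) = σ l := AlgHom.congr_fun τ.2 l
          show g (τ.1 (incl l)) = σ l
          rw [h1]
          exact hfixK g (σ l) (hL σ l)⟩
        one_smul := fun τ => Subtype.ext (by ext x; rfl)
        mul_smul := fun g h τ => Subtype.ext (by ext x; rfl) }
    set φ := MulAction.toPermHom G X with hφ
    obtain ⟨t, ht⟩ := Subalgebra.fg_of_noetherian (⊤ : Subalgebra E ↥F₀)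
    set s : Set Ebar := ⋃ τ : X, (fun b : ↥F₀ => τ.1 b) '' ↑t with hs
    have hsfin : s.Finite := Set.finite_iUnion fun τ => t.finite_toSet.image _
    haveI : Finite ↥s := hsfin.to_subtype
    haveI : Algebra.IsAlgebraic ↥K Ebar := Algebra.IsAlgebraic.tower_top (K := E) ↥K
    set M : IntermediateField ↥K Ebar := IntermediateField.adjoin ↥K s with hM
    haveI : FiniteDimensional ↥K M :=
      IntermediateField.finiteDimensional_adjoin fun x _ => Algebra.IsIntegral.isIntegral x
    have hker : M.fixingSubgroup ≤ φ.ker := by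
      intro g hg
      rw [MonoidHom.mem_ker]
      apply Equiv.ext
      intro τ
      show g • τ = τ
      refine Subtype.ext ?_
      refine AlgHom.ext_of_adjoin_eq_top ht fun b hb => ?_
      show g (τ.1 b) = τ.1 b
      have hmem : τ.1 b ∈ M :=
        IntermediateField.subset_adjoin ↥K s (Set.mem_iUnion.mpr ⟨τ, Set.mem_image_of_mem _ hb⟩)
      exact hg ⟨τ.1 b, hmem⟩
    have hopen : IsOpen (φ.ker : Set G) :=
      Subgroup.isOpen_mono hker M.fixingSubgroup_isOpen
    have hQ : IsPGroup p (G ⧸ φ.ker) := hpro φ.ker hopen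
    have hRange : IsPGroup p φ.range := hQ.of_equiv (QuotientGroup.quotientKerEquivRange φ)
    have hcardX : ¬ p ∣ Nat.card X := fun h => hpF₀ (h.trans (card_ext_dvd incl σ))
    obtain ⟨τ, hτfix⟩ := hRange.nonempty_fixed_point_of_prime_not_dvd_card X hcardX
    have hgfix : ∀ g : G, g • τ = τ := fun g => hτfix ⟨φ g, ⟨g, rfl⟩⟩
    have hτK : ∀ x : ↥F₀, τ.1 x ∈ K := by
      intro x
      refine mem_of_fixed K _ fun g => ?_
      have := hgfix g
      exact AlgHom.congr_fun (congrArg Subtype.val this) x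
    refine ⟨(τ.1.codRestrict K.toSubalgebra hτK : ↥F₀ →ₐ[E] ↥K), ?_⟩
    ext l
    exact AlgHom.congr_fun τ.2 l
  choose f hf using key
  have hinj : Function.Injective f := by
    intro σ₁ σ₂ h
    rw [← hf σ₁, ← hf σ₂, h]
  exact Nat.card_le_card_of_injective f hinj
end Aux


/-- Bound on totally-`K` subextensions (perfect-field case of the main appendix
theorem): let `E` be a perfect field with algebraic closure `Ē`, `K, F` intermediate
fields of `Ē/E`, and `p` a prime not dividing `[F₀ : E]` for any finite-dimensional
intermediate field `F₀ ≤ F`.  If the Galois group `Aut(Ē/K)` with its Krull topology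
is pro-`p`, then for every finite-dimensional totally-`K` intermediate field `L ≤ F`,
in `[0,∞]`, `[L : E]` is at most the `liminf`, over the directed partial order of
finite-dimensional intermediate fields `F₀ ≤ F` (with its `atTop` filter), of the
number of `E`-algebra homomorphisms `F₀ → K`. -/
theorem totallyK_subextension_liminf_bound
    {E Ebar : Type*} [Field E] [Field Ebar] [Algebra E Ebar]
    [IsAlgClosure E Ebar] [PerfectField E]
    (K F : IntermediateField E Ebar)
    (p : ℕ) (hp : p.Prime)
    (hpdeg : ∀ F₀ : IntermediateField E Ebar, F₀ ≤ F → FiniteDimensional E ↥F₀ →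
      ¬ p ∣ Module.finrank E ↥F₀)
    (hpro : ∀ (N : Subgroup (Ebar ≃ₐ[↥K] Ebar)) [N.Normal],
      IsOpen (N : Set (Ebar ≃ₐ[↥K] Ebar)) → IsPGroup p ((Ebar ≃ₐ[↥K] Ebar) ⧸ N))
    (L : IntermediateField E Ebar) (hLF : L ≤ F) [FiniteDimensional E ↥L]
    (hL : ∀ σ : ↥L →ₐ[E] Ebar, ∀ x : ↥L, σ x ∈ K) :
    (Module.finrank E ↥L : ENNReal) ≤
      liminf
        (fun F₀ : {F₀ : IntermediateField E Ebar // F₀ ≤ F ∧ FiniteDimensional E ↥F₀} =>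
          (Nat.card (↥F₀.1 →ₐ[E] ↥K) : ENNReal))
        atTop := by
  haveI : IsAlgClosed Ebar := IsAlgClosure.isAlgClosed E
  haveI : Algebra.IsAlgebraic E Ebar := IsAlgClosure.isAlgebraic
  haveI : Algebra.IsAlgebraic E ↥L := Algebra.IsAlgebraic.of_finite E ↥L
  haveI : Algebra.IsSeparable E ↥L := inferInstance
  have hLcard : Nat.card (↥L →ₐ[E] Ebar) = Module.finrank E ↥L := by
    rw [← Field.finSepDegree_eq_of_isAlgClosed E ↥L Ebar,
      Field.finSepDegree_eq_finrank_of_isSeparable]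
  haveI : Nonempty {F₀ : IntermediateField E Ebar // F₀ ≤ F ∧ FiniteDimensional E ↥F₀} :=
    ⟨⟨L, hLF, inferInstance⟩⟩
  haveI : IsDirected {F₀ : IntermediateField E Ebar // F₀ ≤ F ∧ FiniteDimensional E ↥F₀}
      (· ≤ ·) := by
    constructor
    rintro ⟨a, haF, ha⟩ ⟨b, hbF, hb⟩
    haveI := ha; haveI := hb
    exact ⟨⟨a ⊔ b, sup_le haF hbF, IntermediateField.finiteDimensional_sup a b⟩,
      Subtype.mk_le_mk.mpr le_sup_left, Subtype.mk_le_mk.mpr le_sup_right⟩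
  refine le_liminf_of_le (by isBoundedDefault)
    (eventually_atTop.mpr ⟨⟨L, hLF, inferInstance⟩, fun F₀ hF₀ => ?_⟩)
  haveI : FiniteDimensional E ↥F₀.1 := F₀.2.2
  have h1 : L ≤ F₀.1 := hF₀
  have := card_homs_le K p hp hpro L F₀.1 h1 (hpdeg F₀.1 F₀.2.1 F₀.2.2) hL
  rw [hLcard] at this
  exact_mod_cast this
end

section
/- Let E be a perfect field with algebraic closure Ē, let K be an intermediate field of Ē/E, and let F be a finite-dimensional intermediate field of Ē/E. Suppose there is a prime p not dividing [F : E] such that the Galois group Aut(Ē/K) = (Ē ≃ₐ[K] Ē), with its Krull topology, is pro-p (every quotient by an open normal subgroup is a p-group). Then every intermediate field L of F/E which is totally-K (every E-algebra homomorphism L → Ē has image contained in K) satisfies [L : E] ≤ card(Hom_E(F, K)), the number of E-algebra homomorphisms from F to K. In particular the maximal totally-K subextension of F/E has degree at most card(Hom_E(F,K)) over E. -/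
open IntermediateField

section Aux

variable {E Ebar : Type*} [Field E] [Field Ebar] [Algebra E Ebar]

/-- An element of `Ebar` fixed by every `K`-algebra automorphism lies in `K`. -/
lemma auxA_mem_of_fixed [IsAlgClosure E Ebar] [PerfectField E]
    (K : IntermediateField E Ebar) (y : Ebar)
    (hy : ∀ g : Ebar ≃ₐ[↥K] Ebar, g y = y) : y ∈ K := by
  classical
  haveI : IsAlgClosed Ebar := IsAlgClosure.isAlgClosed E
  haveI : Algebra.IsAlgebraic E Ebar := IsAlgClosure.isAlgebraic
  haveI : Algebra.IsAlgebraic ↥K Ebar := Algebra.IsAlgebraic.tower_top (K := E) ↥K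
  haveI : Algebra.IsSeparable ↥K Ebar :=
    Algebra.isSeparable_tower_top_of_isSeparable E ↥K Ebar
  haveI : IsAlgClosure ↥K Ebar := ⟨inferInstance, inferInstance⟩
  haveI : Normal ↥K Ebar := inferInstance
  have hint : IsIntegral ↥K y := Algebra.IsIntegral.isIntegral y
  have hsep : (minpoly ↥K y).Separable := Algebra.IsSeparable.isSeparable ↥K y
  set q := (minpoly ↥K y).map (algebraMap ↥K Ebar) with hq
  have hroots : ∀ r ∈ q.roots, r = y := by
    intro r hr
    have hr0 : Polynomial.aeval r (minpoly ↥K y) = 0 := by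
      have h := Polynomial.isRoot_of_mem_roots hr
      rwa [Polynomial.IsRoot, Polynomial.eval_map, ← Polynomial.aeval_def] at h
    obtain ⟨σ, hσ⟩ := minpoly.exists_algEquiv_of_root' hint.isAlgebraic hr0
    rw [← hσ, hy σ]
  have hsplit : Polynomial.Splits ((minpoly ↥K y).map (algebraMap ↥K Ebar)) :=
    IsAlgClosed.splits _
  have hcard : (minpoly ↥K y).natDegree = Multiset.card q.roots := by
    rw [← Polynomial.natDegree_map (algebraMap ↥K Ebar)]
    exact hsplit.natDegree_eq_card_roots
  have hnodup : q.roots.Nodup := Polynomial.nodup_roots hsep.map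
  have hrepl : q.roots = Multiset.replicate (Multiset.card q.roots) y :=
    Multiset.eq_replicate.mpr ⟨rfl, hroots⟩
  have hle : Multiset.card q.roots ≤ 1 := by
    have hcount := (Multiset.nodup_iff_count_le_one.mp hnodup) y
    rwa [hrepl, Multiset.count_replicate_self] at hcount
  have hdeg1 : (minpoly ↥K y).natDegree = 1 :=
    le_antisymm (hcard ▸ hle) (minpoly.natDegree_pos hint)
  have hdeg : (minpoly ↥K y).degree = 1 :=
    (Polynomial.degree_eq_iff_natDegree_eq (minpoly.ne_zero hint)).mpr hdeg1
  obtain ⟨k, hk⟩ := minpoly.degree_eq_one_iff.mp hdeg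
  have hk' : algebraMap ↥K Ebar k = (k : Ebar) := rfl
  rw [← hk, hk']
  exact k.2

/-- Any `E`-algebra hom from `L` to `Ebar` extends to `F ⊇ L`. -/
lemma auxB_exists_extension [IsAlgClosure E Ebar]
    (F : IntermediateField E Ebar) [FiniteDimensional E ↥F]
    (L : IntermediateField E Ebar) (hLF : L ≤ F) (τ : ↥L →ₐ[E] Ebar) :
    ∃ σ : ↥F →ₐ[E] Ebar, σ.comp (IntermediateField.inclusion hLF) = τ := by
  haveI : IsAlgClosed Ebar := IsAlgClosure.isAlgClosed E
  set j : ↥L →ₐ[E] ↥F := IntermediateField.inclusion hLF with hjdef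
  set e : ↥L ≃ₐ[E] ↥j.fieldRange := AlgEquiv.ofInjectiveField j with he
  obtain ⟨φ, hφ⟩ := IntermediateField.exists_algHom_of_splits
    (K := Ebar) (L := j.fieldRange) (f := τ.comp e.symm.toAlgHom)
    (fun s => ⟨IsIntegral.of_finite E s, IsAlgClosed.splits _⟩)
  refine ⟨φ, ?_⟩
  ext x
  have h1 : (j.fieldRange).val (e x) = j x := rfl
  have h2 := AlgHom.congr_fun hφ (e x)
  rw [AlgHom.comp_apply, AlgHom.comp_apply, AlgEquiv.coe_algHom,
    e.symm_apply_apply] at h2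
  rw [AlgHom.comp_apply]
  rw [h1] at h2
  exact h2

/-- The number of extensions of `τ` to `F0` divides `[F0 : E0]`. -/
lemma auxC_card_dvd (E0 L0 F0 C : Type*) [Field E0] [Field L0] [Field F0] [Field C]
    [Algebra E0 L0] [Algebra E0 F0] [Algebra E0 C]
    [FiniteDimensional E0 F0] [Algebra.IsSeparable E0 F0] [IsAlgClosed C]
    (j : L0 →ₐ[E0] F0) (τ : L0 →ₐ[E0] C) :
    Nat.card {σ : F0 →ₐ[E0] C // σ.comp j = τ} ∣ Module.finrank E0 F0 := by
  letI : Algebra L0 F0 := j.toRingHom.toAlgebra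
  letI : Algebra L0 C := τ.toRingHom.toAlgebra
  letI : IsScalarTower E0 L0 F0 :=
    IsScalarTower.of_algebraMap_eq (fun x => (j.commutes x).symm)
  letI : IsScalarTower E0 L0 C :=
    IsScalarTower.of_algebraMap_eq (fun x => (τ.commutes x).symm)
  let Equiv2 : {σ : F0 →ₐ[E0] C // σ.comp j = τ} ≃ (F0 →ₐ[L0] C) :=
    { toFun := fun σ =>
        { toRingHom := σ.1.toRingHom,
          commutes' := fun y => AlgHom.congr_fun σ.2 y }
      invFun := fun ψ => ⟨ψ.restrictScalars E0, AlgHom.ext fun y => ψ.commutes y⟩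
      left_inv := fun σ => Subtype.ext (AlgHom.ext fun _ => rfl)
      right_inv := fun ψ => AlgHom.ext fun _ => rfl }
  haveI : FiniteDimensional L0 F0 := Module.Finite.right E0 L0 F0
  haveI : Algebra.IsAlgebraic L0 F0 := Algebra.IsAlgebraic.of_finite _ _
  haveI : Algebra.IsSeparable L0 F0 :=
    Algebra.isSeparable_tower_top_of_isSeparable E0 L0 F0
  haveI : FiniteDimensional E0 L0 :=
    FiniteDimensional.of_injective j.toLinearMap j.injective
  have h1 : Nat.card {σ : F0 →ₐ[E0] C // σ.comp j = τ}
      = Nat.card (F0 →ₐ[L0] C) := Nat.card_congr Equiv2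
  have h2 : Field.finSepDegree L0 F0 = Nat.card (F0 →ₐ[L0] C) :=
    Field.finSepDegree_eq_of_isAlgClosed _ _ _
  have h3 : Field.finSepDegree L0 F0 = Module.finrank L0 F0 :=
    Field.finSepDegree_eq_finrank_of_isSeparable _ _
  rw [h1, ← h2, h3]
  exact ⟨Module.finrank E0 L0, by rw [← Module.finrank_mul_finrank E0 L0 F0, mul_comm]⟩

/-- Corestriction of an algebra hom landing in an intermediate field. -/
lemma auxD_codRestrict (K : IntermediateField E Ebar) {A : Type*} [Semiring A]
    [Algebra E A] (s : A →ₐ[E] Ebar) (h : ∀ x, s x ∈ K) :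
    ∃ t : A →ₐ[E] ↥K, ∀ x, (t x : Ebar) = s x :=
  ⟨s.codRestrict K.toSubalgebra h, fun _ => rfl⟩

end Aux

/-- Bound on totally-`K` subextensions of a finite extension `F/E` of a perfect field:
if `p` is a prime not dividing `[F : E]` and the Galois group `Aut(Ē/K)` (with its
Krull topology) is pro-`p`, then every intermediate field `L ≤ F` which is totally-`K`
(every `E`-algebra homomorphism `L → Ē` has image contained in `K`) satisfies
`[L : E] ≤ card (Hom_E(F, K))`. -/
theorem totallyK_subextension_card_bound
    {E Ebar : Type*} [Field E] [Field Ebar] [Algebra E Ebar]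
    [IsAlgClosure E Ebar] [PerfectField E]
    (K F : IntermediateField E Ebar) [FiniteDimensional E F]
    (p : ℕ) (hp : p.Prime) (hpdeg : ¬ p ∣ Module.finrank E F)
    (hpro : ∀ (N : Subgroup (Ebar ≃ₐ[↥K] Ebar)) [N.Normal],
      IsOpen (N : Set (Ebar ≃ₐ[↥K] Ebar)) → IsPGroup p ((Ebar ≃ₐ[↥K] Ebar) ⧸ N))
    (L : IntermediateField E Ebar) (hLF : L ≤ F)
    (hL : ∀ σ : ↥L →ₐ[E] Ebar, ∀ x : ↥L, σ x ∈ K) :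
    Module.finrank E ↥L ≤ Nat.card (↥F →ₐ[E] ↥K) := by
  classical
  haveI : IsAlgClosed Ebar := IsAlgClosure.isAlgClosed E
  haveI : Algebra.IsAlgebraic E Ebar := IsAlgClosure.isAlgebraic
  haveI : FiniteDimensional E ↥L :=
    FiniteDimensional.of_injective (IntermediateField.inclusion hLF).toLinearMap
      (IntermediateField.inclusion_injective hLF)
  have key : ∀ τ : ↥L →ₐ[E] Ebar, ∃ σK : ↥F →ₐ[E] ↥K,
      ∀ x : ↥L, (σK (IntermediateField.inclusion hLF x) : Ebar) = τ x := by
    intro τ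
    set j : ↥L →ₐ[E] ↥F := IntermediateField.inclusion hLF with hjdef
    set Ext := {σ : ↥F →ₐ[E] Ebar // σ.comp j = τ} with hExtdef
    haveI : Finite Ext := Subtype.finite
    have hne : Nonempty Ext := by
      obtain ⟨σ, hσ⟩ := auxB_exists_extension F L hLF τ
      exact ⟨⟨σ, hσ⟩⟩
    have hdvd : Nat.card Ext ∣ Module.finrank E ↥F := auxC_card_dvd E ↥L ↥F Ebar j τ
    have hpcard : ¬ p ∣ Nat.card Ext := fun h => hpdeg (h.trans hdvd)
    set G := Ebar ≃ₐ[↥K] Ebar with hGdef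
    have hfixτ : ∀ (g : G) (x : ↥L), g (τ x) = τ x := by
      intro g x
      have h0 : algebraMap ↥K Ebar ⟨τ x, hL τ x⟩ = τ x := rfl
      rw [← h0, g.commutes]
    letI : SMul G Ext := ⟨fun g σ =>
      ⟨((g.restrictScalars E : Ebar ≃ₐ[E] Ebar) : Ebar →ₐ[E] Ebar).comp σ.1, by
        ext x
        simp only [AlgHom.comp_apply]
        have h1 := AlgHom.congr_fun σ.2 x
        simp only [AlgHom.comp_apply] at h1
        rw [h1]
        exact hfixτ g x⟩⟩
    letI : MulAction G Ext :=
      { one_smul := fun σ => Subtype.ext (AlgHom.ext fun x => rfl)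
        mul_smul := fun g h σ => Subtype.ext (AlgHom.ext fun x => rfl) }
    set act := MulAction.toPermHom G Ext with hactdef
    set N := act.ker with hNdef
    -- N is open
    set b := Module.finBasis E ↥F with hbdef
    set S : Set Ebar :=
      Set.range (fun q : Ext × (Fin (Module.finrank E ↥F)) => (q.1.1 (b q.2) : Ebar))
      with hSdef
    haveI : Finite ↥S := (Set.finite_range _).to_subtype
    set M : IntermediateField ↥K Ebar := IntermediateField.adjoin ↥K S with hMdef
    haveI : FiniteDimensional ↥K M := by
      apply IntermediateField.finiteDimensional_adjoin
      intro x _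
      exact (Algebra.IsIntegral.isIntegral (R := E) x).tower_top
    have hmemM : ∀ (σ : Ext) (x : ↥F), σ.1 x ∈ M := by
      intro σ x
      have hx : σ.1 x = ∑ i, algebraMap E Ebar (b.repr x i) * σ.1 (b i) := by
        conv_lhs => rw [← b.sum_repr x]
        rw [map_sum]
        refine Finset.sum_congr rfl fun i _ => ?_
        rw [map_smul, Algebra.smul_def]
      rw [hx]
      refine sum_mem fun i _ => mul_mem ?_ ?_
      · rw [IsScalarTower.algebraMap_apply E ↥K Ebar]
        exact M.algebraMap_mem _
      · exact IntermediateField.subset_adjoin ↥K S ⟨(σ, i), rfl⟩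
    have hNle : M.fixingSubgroup ≤ N := by
      intro g hg
      rw [hNdef, MonoidHom.mem_ker]
      refine Equiv.ext fun σ => ?_
      show g • σ = σ
      refine Subtype.ext (AlgHom.ext fun x => ?_)
      show g (σ.1 x) = σ.1 x
      exact (M.mem_fixingSubgroup_iff g).mp hg (σ.1 x) (hmemM σ x)
    have hNopen : IsOpen (N : Set G) :=
      Subgroup.isOpen_mono hNle M.fixingSubgroup_isOpen
    haveI : N.Normal := MonoidHom.normal_ker act
    haveI : Fact p.Prime := ⟨hp⟩
    have hPG : IsPGroup p (G ⧸ N) := hpro N hNopen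
    letI : MulAction (G ⧸ N) Ext := MulAction.compHom Ext (QuotientGroup.kerLift act)
    obtain ⟨σ0, hσ0⟩ := hPG.nonempty_fixed_point_of_prime_not_dvd_card Ext hpcard
    have hfix : ∀ (g : G) (x : ↥F), g (σ0.1 x) = σ0.1 x := by
      intro g x
      have h := hσ0 (QuotientGroup.mk g)
      have h2 : g • σ0 = σ0 := h
      exact congrArg (fun (σ : Ext) => σ.1 x) h2
    have hmemK : ∀ x : ↥F, σ0.1 x ∈ K := fun x =>
      auxA_mem_of_fixed K (σ0.1 x) (fun g => hfix g x)
    obtain ⟨t, ht⟩ := auxD_codRestrict K σ0.1 hmemK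
    refine ⟨t, fun x => ?_⟩
    rw [ht]
    exact AlgHom.congr_fun σ0.2 x
  choose Φ hΦ using key
  have hinj : Function.Injective Φ := by
    intro τ1 τ2 h
    ext x
    rw [← hΦ τ1 x, ← hΦ τ2 x, h]
  haveI : Finite (↥F →ₐ[E] ↥K) := Finite.of_fintype _
  have h1 : Module.finrank E ↥L = Field.finSepDegree E ↥L :=
    (Field.finSepDegree_eq_finrank_of_isSeparable E ↥L).symm
  have h2 : Field.finSepDegree E ↥L = Nat.card (↥L →ₐ[E] Ebar) :=
    Field.finSepDegree_eq_of_isAlgClosed E ↥L Ebar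
  rw [h1, h2]
  exact Nat.card_le_card_of_injective Φ hinj
end

section
/- Let E be a perfect field with algebraic closure Ē, let K be an intermediate field of Ē/E, and let g(X) ∈ E[X] be an irreducible polynomial. Suppose there is a prime p not dividing deg(g) such that the Galois group Aut(Ē/K) = (Ē ≃ₐ[K] Ē), with its Krull topology, is pro-p (every quotient by an open normal subgroup is a p-group). Let F = E[X]/(g(X)). Then every subfield L of F containing E which is totally-K (every E-algebra homomorphism L → Ē has image contained in K) satisfies [L : E] ≤ card{ x ∈ K : g(x) = 0 }, the number of distinct roots of g in K. -/
open Polynomial IntermediateField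

lemma aux_mem_of_fixed {E Ebar : Type*} [Field E] [Field Ebar] [Algebra E Ebar]
    [IsAlgClosure E Ebar] [PerfectField E] (K : IntermediateField E Ebar) {x : Ebar}
    (hx : ∀ σ : Ebar ≃ₐ[↥K] Ebar, σ x = x) : x ∈ K := by
  haveI : IsAlgClosed Ebar := IsAlgClosure.isAlgClosed E
  haveI : Algebra.IsAlgebraic E Ebar := IsAlgClosure.isAlgebraic
  haveI : Algebra.IsAlgebraic ↥K Ebar := Algebra.IsAlgebraic.tower_top (K := E) ↥K
  haveI : IsAlgClosure ↥K Ebar := ⟨inferInstance, inferInstance⟩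
  haveI : Algebra.IsSeparable E Ebar := inferInstance
  haveI : Algebra.IsSeparable ↥K Ebar := Algebra.isSeparable_tower_top_of_isSeparable E ↥K Ebar
  have hint : IsIntegral ↥K x := Algebra.IsIntegral.isIntegral x
  have hsep : (minpoly ↥K x).Separable := Algebra.IsSeparable.isSeparable ↥K x
  have hsplit : ((minpoly ↥K x).map (algebraMap ↥K Ebar)).Splits := IsAlgClosed.splits _
  have hcard : Fintype.card ((minpoly ↥K x).rootSet Ebar) = (minpoly ↥K x).natDegree :=
    card_rootSet_eq_natDegree hsep hsplit
  have hall : ∀ y ∈ (minpoly ↥K x).rootSet Ebar, y = x := by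
    intro y hy
    rw [mem_rootSet] at hy
    obtain ⟨σ, hσ⟩ := minpoly.exists_algEquiv_of_root (Algebra.IsAlgebraic.isAlgebraic x) hy.2
    exact σ.injective (by rw [hσ, hx σ])
  have hsub : (minpoly ↥K x).natDegree ≤ 1 := by
    rw [← hcard]
    refine Fintype.card_le_one_iff.mpr ?_
    rintro ⟨y, hy⟩ ⟨z, hz⟩
    exact Subtype.ext ((hall y hy).trans (hall z hz).symm)
  have hdeg : (minpoly ↥K x).natDegree = 1 := le_antisymm hsub (minpoly.natDegree_pos hint)
  have hdeg' : (minpoly ↥K x).degree = (1 : ℕ) :=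
    (Polynomial.degree_eq_iff_natDegree_eq (minpoly.ne_zero hint)).mpr hdeg
  have hmem : x ∈ (algebraMap ↥K Ebar).range :=
    minpoly.degree_eq_one_iff.mp (by exact_mod_cast hdeg')
  obtain ⟨k, hk⟩ := hmem
  rw [← hk]
  exact k.2

set_option maxHeartbeats 1000000 in
/-- Bound on totally-`K` subextensions of `F = E[X]/(g)` for an irreducible polynomial
`g` over a perfect field `E`: if `p` is a prime not dividing `deg g` and the Galois
group `Aut(Ē/K)` with its Krull topology is pro-`p`, then every subfield `L` of `F`
containing `E` which is totally-`K` (every `E`-algebra homomorphism `L → Ē` has image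
contained in `K`) satisfies `[L : E] ≤ #{x ∈ K : g(x) = 0}`. -/
theorem totallyK_subextension_roots_bound
    {E Ebar : Type*} [Field E] [Field Ebar] [Algebra E Ebar]
    [IsAlgClosure E Ebar] [PerfectField E]
    (K : IntermediateField E Ebar)
    (g : Polynomial E) [Fact (Irreducible g)]
    (p : ℕ) (hp : p.Prime) (hpdeg : ¬ p ∣ g.natDegree)
    (hpro : ∀ (N : Subgroup (Ebar ≃ₐ[↥K] Ebar)) [N.Normal],
      IsOpen (N : Set (Ebar ≃ₐ[↥K] Ebar)) → IsPGroup p ((Ebar ≃ₐ[↥K] Ebar) ⧸ N))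
    (L : IntermediateField E (AdjoinRoot g))
    (hL : ∀ σ : ↥L →ₐ[E] Ebar, ∀ x : ↥L, σ x ∈ K) :
    Module.finrank E ↥L ≤ Set.ncard {x : ↥K | Polynomial.aeval x g = 0} := by
  classical
  have hirr : Irreducible g := Fact.out
  have hg0 : g ≠ 0 := hirr.ne_zero
  haveI : IsAlgClosed Ebar := IsAlgClosure.isAlgClosed E
  -- instances on F = AdjoinRoot g
  haveI : Module.Finite E (AdjoinRoot g) := (AdjoinRoot.powerBasis hg0).finite
  have hrank : Module.finrank E (AdjoinRoot g) = g.natDegree := by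
    rw [(AdjoinRoot.powerBasis hg0).finrank, AdjoinRoot.powerBasis_dim]
  haveI : Algebra.IsAlgebraic E (AdjoinRoot g) := Algebra.IsAlgebraic.of_finite E _
  haveI : Algebra.IsSeparable E (AdjoinRoot g) := inferInstance
  haveI : FiniteDimensional E ↥L := inferInstance
  haveI : Algebra.IsSeparable E ↥L :=
    Algebra.isSeparable_tower_bot_of_isSeparable E ↥L (AdjoinRoot g)
  -- instances over K
  haveI : Algebra.IsAlgebraic E Ebar := IsAlgClosure.isAlgebraic
  haveI : Algebra.IsAlgebraic ↥K Ebar := Algebra.IsAlgebraic.tower_top (K := E) ↥K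
  -- key: for each embedding of L, there is an embedding of F fixed by Gal(Ebar/K)
  have key : ∀ τ : ↥L →ₐ[E] Ebar, ∃ ψ : AdjoinRoot g →ₐ[E] Ebar,
      (∀ x : ↥L, ψ ↑x = τ x) ∧ ψ (AdjoinRoot.root g) ∈ K := by
    intro τ
    letI : Algebra ↥L Ebar := τ.toAlgebra
    haveI : IsScalarTower E ↥L Ebar :=
      IsScalarTower.of_algebraMap_eq fun x => (τ.commutes x).symm
    haveI : FiniteDimensional ↥L (AdjoinRoot g) := FiniteDimensional.right E ↥L (AdjoinRoot g)
    haveI : Algebra.IsSeparable ↥L (AdjoinRoot g) :=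
      Algebra.isSeparable_tower_top_of_isSeparable E ↥L (AdjoinRoot g)
    set A := AdjoinRoot g →ₐ[↥L] Ebar with hA
    have hcardA : Nat.card A = Module.finrank ↥L (AdjoinRoot g) := by
      rw [Nat.card_eq_fintype_card]
      exact AlgHom.card ↥L (AdjoinRoot g) Ebar
    have hmul : Module.finrank E ↥L * Module.finrank ↥L (AdjoinRoot g) = g.natDegree := by
      rw [Module.finrank_mul_finrank, hrank]
    have hpA : ¬ p ∣ Nat.card A := by
      rw [hcardA]
      intro h
      exact hpdeg (hmul ▸ h.mul_left _)
    -- the action of Gal(Ebar/K) on A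
    letI : MulAction (Ebar ≃ₐ[↥K] Ebar) A :=
      { smul := fun σ φ =>
          { toRingHom := (σ : Ebar →+* Ebar).comp φ.toRingHom
            commutes' := fun l => by
              show σ (φ (algebraMap ↥L (AdjoinRoot g) l)) = algebraMap ↥L Ebar l
              rw [φ.commutes l]
              show σ (τ l) = τ l
              exact σ.commutes (⟨τ l, hL τ l⟩ : ↥K) }
        one_smul := fun φ => DFunLike.ext _ _ fun x => rfl
        mul_smul := fun σ σ' φ => DFunLike.ext _ _ fun x => rfl }
    have smul_apply : ∀ (σ : Ebar ≃ₐ[↥K] Ebar) (φ : A) (x : AdjoinRoot g),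
        (σ • φ) x = σ (φ x) := fun _ _ _ => rfl
    set ρ : (Ebar ≃ₐ[↥K] Ebar) →* Equiv.Perm A := MulAction.toPermHom _ A with hρ
    set N := ρ.ker with hN
    -- smul fixed iff fixes value at root
    have smul_eq_of_root : ∀ (σ : Ebar ≃ₐ[↥K] Ebar) (φ : A),
        σ (φ (AdjoinRoot.root g)) = φ (AdjoinRoot.root g) → σ • φ = φ := by
      intro σ φ h
      apply AlgHom.restrictScalars_injective E
      exact AdjoinRoot.algHom_ext h
    -- N is open
    have hNopen : IsOpen (N : Set (Ebar ≃ₐ[↥K] Ebar)) := by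
      set S : Set Ebar := Set.range fun φ : A => φ (AdjoinRoot.root g) with hS
      haveI : Finite ↥S := Set.finite_range _ |>.to_subtype
      set M := IntermediateField.adjoin ↥K S with hM
      haveI : FiniteDimensional ↥K ↥M :=
        IntermediateField.finiteDimensional_adjoin fun x _ => Algebra.IsIntegral.isIntegral x
      refine Subgroup.isOpen_mono (H₁ := M.fixingSubgroup) ?_ M.fixingSubgroup_isOpen
      intro σ hσ
      rw [MonoidHom.mem_ker]
      refine Equiv.ext fun φ => ?_
      show σ • φ = φ
      refine smul_eq_of_root σ φ ?_
      exact ((IntermediateField.mem_fixingSubgroup_iff M σ).mp hσ) _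
        (IntermediateField.subset_adjoin _ _ ⟨φ, rfl⟩)
    -- p-group
    haveI := Fact.mk hp
    have hP : IsPGroup p ρ.range :=
      (hpro N hNopen).of_equiv (QuotientGroup.quotientKerEquivRange ρ)
    obtain ⟨φ, hφ⟩ := hP.nonempty_fixed_point_of_prime_not_dvd_card A hpA
    have hfix : ∀ σ : Ebar ≃ₐ[↥K] Ebar, σ • φ = φ := fun σ =>
      hφ ⟨ρ σ, ⟨σ, rfl⟩⟩
    have hfixroot : ∀ σ : Ebar ≃ₐ[↥K] Ebar, σ (φ (AdjoinRoot.root g)) = φ (AdjoinRoot.root g) :=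
      fun σ => DFunLike.congr_fun (hfix σ) (AdjoinRoot.root g)
    refine ⟨φ.restrictScalars E, fun x => ?_, aux_mem_of_fixed K hfixroot⟩
    show φ ((algebraMap ↥L (AdjoinRoot g)) x) = τ x
    rw [φ.commutes x]
    rfl
  choose ψ hψ hK using key
  -- the injection into roots of g in K
  have hval : ∀ τ : ↥L →ₐ[E] Ebar,
      Polynomial.aeval (⟨ψ τ (AdjoinRoot.root g), hK τ⟩ : ↥K) g = 0 := by
    intro τ
    have h1 : Polynomial.aeval (ψ τ (AdjoinRoot.root g)) g = 0 := by
      rw [Polynomial.aeval_algHom_apply, AdjoinRoot.aeval_eq, AdjoinRoot.mk_self, map_zero]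
    apply (algebraMap ↥K Ebar).injective
    rw [map_zero, ← Polynomial.aeval_algebraMap_apply]
    exact h1
  set f : (↥L →ₐ[E] Ebar) → {x : ↥K | Polynomial.aeval x g = 0} :=
    fun τ => ⟨⟨ψ τ (AdjoinRoot.root g), hK τ⟩, hval τ⟩ with hf
  have hinj : Function.Injective f := by
    intro τ₁ τ₂ h
    have hroots : ψ τ₁ (AdjoinRoot.root g) = ψ τ₂ (AdjoinRoot.root g) :=
      Subtype.ext_iff.mp (Subtype.ext_iff.mp h)
    have hψeq : ψ τ₁ = ψ τ₂ := AdjoinRoot.algHom_ext hroots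
    ext x
    rw [← hψ τ₁ x, ← hψ τ₂ x, hψeq]
  have hsetfin : {x : ↥K | Polynomial.aeval x g = 0}.Finite := by
    have heq : {x : ↥K | Polynomial.aeval x g = 0} = g.rootSet ↥K := by
      ext x
      simp [Polynomial.mem_rootSet, hg0]
    rw [heq]
    exact g.rootSet_finite ↥K
  haveI := hsetfin.to_subtype
  have hcardL : Fintype.card (↥L →ₐ[E] Ebar) = Module.finrank E ↥L :=
    AlgHom.card E ↥L Ebar
  rw [← hcardL, ← Nat.card_coe_set_eq, ← Nat.card_eq_fintype_card]
  exact Nat.card_le_card_of_injective f hinj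
end

section
/- Let g(X) ∈ ℚ[X] be an irreducible polynomial of odd degree, and let F = ℚ[X]/(g(X)). Then every totally real subfield L of F (every ring homomorphism L → ℂ has image contained in ℝ) satisfies [L : ℚ] ≤ r, where r is the number of distinct real roots of g. -/
set_option maxHeartbeats 1000000
set_option synthInstance.maxHeartbeats 400000

open Polynomial Module

/-- A finset closed under a fixed-point-free involution has even cardinality. -/
private lemma even_card_of_closed_invol {α : Type*} [DecidableEq α] (f : α → α)
    (hf : Function.Involutive f) (h : ∀ a, f a ≠ a) :
    ∀ s : Finset α, (∀ a ∈ s, f a ∈ s) → Even s.card := by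
  intro s
  induction s using Finset.strongInduction with
  | _ s ih =>
    intro hs
    rcases s.eq_empty_or_nonempty with rfl | ⟨a, ha⟩
    · simp
    · have hfa : f a ∈ s := hs a ha
      have hne : f a ≠ a := h a
      set t := (s.erase a).erase (f a) with ht
      have htsub : t ⊆ s := (Finset.erase_subset _ _).trans (Finset.erase_subset _ _)
      have hssub : t ⊂ s := (Finset.ssubset_iff_of_subset htsub).mpr
        ⟨a, ha, by simp [ht]⟩
      have hmemfa : f a ∈ s.erase a := Finset.mem_erase.mpr ⟨hne, hfa⟩
      have hcard : s.card = t.card + 2 := by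
        rw [ht, Finset.card_erase_of_mem hmemfa, Finset.card_erase_of_mem ha]
        have h2 : 2 ≤ s.card := Finset.one_lt_card.mpr ⟨a, ha, f a, hfa, hne.symm⟩
        omega
      have hclosed : ∀ b ∈ t, f b ∈ t := by
        intro b hb
        rw [ht, Finset.mem_erase, Finset.mem_erase] at hb ⊢
        refine ⟨fun hbf => hb.2.1 ?_, fun hba => hb.1 ?_, hs b hb.2.2⟩
        · have := congrArg f hbf; rwa [hf, hf] at this
        · rw [← hba, hf]
      have := ih t hssub hclosed
      rw [hcard]
      exact this.add (by norm_num)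

private lemma exists_fixed_of_odd {α : Type*} [Fintype α] (f : α → α)
    (hf : Function.Involutive f) (hodd : Odd (Fintype.card α)) : ∃ a, f a = a := by
  classical
  by_contra hcon
  push_neg at hcon
  have := even_card_of_closed_invol f hf hcon Finset.univ (fun a _ => Finset.mem_univ _)
  rw [Finset.card_univ] at this
  exact (Nat.not_even_iff_odd.mpr hodd) this

/-- Let `g ∈ ℚ[X]` be irreducible of odd degree and `F = ℚ[X]/(g)`.  Then every
totally real subfield `L` of `F` (every ring homomorphism `L → ℂ` has image contained
in `ℝ`) satisfies `[L : ℚ] ≤ r`, where `r` is the number of distinct real roots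
of `g`. -/
theorem totallyReal_subfield_card_le_real_roots
    (g : Polynomial ℚ) [Fact (Irreducible g)] (hodd : Odd g.natDegree)
    (L : IntermediateField ℚ (AdjoinRoot g))
    (hL : ∀ σ : ↥L →+* ℂ, ∀ x : ↥L, σ x ∈ Set.range ((↑) : ℝ → ℂ)) :
    Module.finrank ℚ ↥L ≤ Set.ncard {x : ℝ | Polynomial.aeval x g = 0} := by
  classical
  have hirr : Irreducible g := Fact.out
  have hg0 : g ≠ 0 := hirr.ne_zero
  set F := AdjoinRoot g with hF
  haveI : FiniteDimensional ℚ F := (AdjoinRoot.powerBasis hg0).finite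
  have hfinrank : Module.finrank ℚ F = g.natDegree := by
    rw [(AdjoinRoot.powerBasis hg0).finrank]
    rfl
  haveI : FiniteDimensional ℚ (↥L) := FiniteDimensional.left ℚ (↥L) F
  haveI : FiniteDimensional (↥L) F := FiniteDimensional.right ℚ (↥L) F
  haveI : CharZero (↥L) := charZero_of_injective_algebraMap (algebraMap ℚ (↥L)).injective
  -- For every σ : L →ₐ[ℚ] ℂ there is an extension φ : F →ₐ[ℚ] ℂ with real image of the root
  have key : ∀ σ : (↥L) →ₐ[ℚ] ℂ, ∃ φ : F →ₐ[ℚ] ℂ,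
      (∀ l : ↥L, φ (l : F) = σ l) ∧ (φ (AdjoinRoot.root g)).im = 0 := by
    intro σ
    have hreal : ∀ l : ↥L, (σ l).im = 0 := by
      intro l
      obtain ⟨x, hx⟩ := hL σ.toRingHom l
      rw [show σ l = σ.toRingHom l from rfl, ← hx]
      simp
    -- the real factorization of σ
    let τ : (↥L) →+* ℝ :=
      { toFun := fun l => (σ l).re
        map_one' := by simp
        map_mul' := fun a b => by simp [map_mul, Complex.mul_re, hreal]
        map_zero' := by simp
        map_add' := fun a b => by simp [map_add, Complex.add_re] }
    have hτ : ∀ l : ↥L, ((τ l : ℝ) : ℂ) = σ l := by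
      intro l
      apply Complex.ext
      · simp [τ]
      · simp [τ, hreal l]
    letI algLC : Algebra (↥L) ℂ := ((Complex.ofRealHom).comp τ).toAlgebra
    have halg : ∀ l : ↥L, algebraMap (↥L) ℂ l = ((τ l : ℝ) : ℂ) := fun l => rfl
    haveI : IsScalarTower ℚ (↥L) ℂ := by
      refine IsScalarTower.of_algebraMap_eq fun q => ?_
      rw [halg]
      rw [show algebraMap ℚ (↥L) q = (q : ↥L) from by
        simp [eq_ratCast (algebraMap ℚ (↥L)) q]]
      rw [map_ratCast τ q]
      simp [eq_ratCast (algebraMap ℚ ℂ) q]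
    haveI : Algebra.IsSeparable (↥L) F := Algebra.IsSeparable.of_integral _ _
    have hcard : Fintype.card (F →ₐ[↥L] ℂ) = finrank (↥L) F := AlgHom.card (↥L) F ℂ
    have hoddLF : Odd (finrank (↥L) F) := by
      have hmul : finrank ℚ (↥L) * finrank (↥L) F = finrank ℚ F :=
        finrank_mul_finrank ℚ (↥L) F
      have : Odd (finrank ℚ (↥L) * finrank (↥L) F) := by
        rw [hmul, hfinrank]; exact hodd
      exact (Nat.odd_mul.mp this).2
    -- complex conjugation as an involution on F →ₐ[L] ℂ
    let J : (F →ₐ[↥L] ℂ) → (F →ₐ[↥L] ℂ) := fun φ =>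
      { toRingHom := (starRingEnd ℂ).comp φ.toRingHom
        commutes' := fun l => by
          show (starRingEnd ℂ) (φ (algebraMap (↥L) F l)) = algebraMap (↥L) ℂ l
          rw [φ.commutes, halg, Complex.conj_ofReal] }
    have hJ : Function.Involutive J := by
      intro φ
      apply AlgHom.ext
      intro x
      simp [J]
    obtain ⟨φ₀, hφ₀⟩ : ∃ φ₀, J φ₀ = φ₀ := by
      apply exists_fixed_of_odd J hJ
      rw [hcard]; exact hoddLF
    have hfix : ∀ x : F, (starRingEnd ℂ) (φ₀ x) = φ₀ x := by
      intro x
      have := congrArg (fun ψ => ψ x) hφ₀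
      simpa [J] using this
    refine ⟨φ₀.restrictScalars ℚ, fun l => ?_, ?_⟩
    · have h1 : (φ₀.restrictScalars ℚ) (l : F) = φ₀ (algebraMap (↥L) F l) := rfl
      rw [h1, φ₀.commutes, halg, hτ]
    · have := hfix (AdjoinRoot.root g)
      rw [Complex.conj_eq_iff_im] at this
      exact this
  -- choose extensions
  choose φ hφres hφim using key
  -- the injection into real roots
  have hset : {x : ℝ | Polynomial.aeval x g = 0}.Finite := by
    have : {x : ℝ | Polynomial.aeval x g = 0} ⊆ g.rootSet ℝ := by
      intro x hx
      rw [Polynomial.mem_rootSet]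
      exact ⟨hg0, hx⟩
    exact (g.rootSet_finite ℝ).subset this
  haveI : Finite {x : ℝ | Polynomial.aeval x g = 0} := hset.to_subtype
  let Φ : ((↥L) →ₐ[ℚ] ℂ) → {x : ℝ | Polynomial.aeval x g = 0} := fun σ =>
    ⟨(φ σ (AdjoinRoot.root g)).re, by
      have hre : ((φ σ (AdjoinRoot.root g)).re : ℂ) = φ σ (AdjoinRoot.root g) := by
        apply Complex.ext <;> simp [hφim σ]
      have : Polynomial.aeval (((φ σ (AdjoinRoot.root g)).re : ℝ) : ℂ) g = 0 := by
        rw [hre, Polynomial.aeval_algHom_apply]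
        erw [AdjoinRoot.aeval_eq (f := g) g]
        rw [AdjoinRoot.mk_self,
          map_zero]
      have h2 : ((Polynomial.aeval ((φ σ (AdjoinRoot.root g)).re : ℝ) g : ℝ) : ℂ) = 0 := by
        rw [← this, Polynomial.aeval_def, Polynomial.aeval_def,
          show ((Polynomial.eval₂ (algebraMap ℚ ℝ) ((φ σ (AdjoinRoot.root g)).re) g : ℝ) : ℂ) =
            Complex.ofRealHom (Polynomial.eval₂ (algebraMap ℚ ℝ)
              ((φ σ (AdjoinRoot.root g)).re) g) from rfl,
          Polynomial.hom_eval₂,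
          Subsingleton.elim (Complex.ofRealHom.comp (algebraMap ℚ ℝ)) (algebraMap ℚ ℂ)]
        rfl
      exact_mod_cast h2⟩
  have hΦinj : Function.Injective Φ := by
    intro σ₁ σ₂ h
    have hroot : φ σ₁ (AdjoinRoot.root g) = φ σ₂ (AdjoinRoot.root g) := by
      have h1 : ((φ σ₁ (AdjoinRoot.root g)).re : ℂ) = φ σ₁ (AdjoinRoot.root g) := by
        apply Complex.ext <;> simp [hφim σ₁]
      have h2 : ((φ σ₂ (AdjoinRoot.root g)).re : ℂ) = φ σ₂ (AdjoinRoot.root g) := by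
        apply Complex.ext <;> simp [hφim σ₂]
      rw [← h1, ← h2]
      exact_mod_cast congrArg Subtype.val h
    have hφeq : φ σ₁ = φ σ₂ := AdjoinRoot.algHom_ext hroot
    apply AlgHom.ext
    intro l
    rw [← hφres σ₁ l, ← hφres σ₂ l, hφeq]
  -- conclude
  have hLcard : Fintype.card ((↥L) →ₐ[ℚ] ℂ) = finrank ℚ (↥L) := AlgHom.card ℚ (↥L) ℂ
  calc Module.finrank ℚ (↥L) = Fintype.card ((↥L) →ₐ[ℚ] ℂ) := hLcard.symm
    _ = Nat.card ((↥L) →ₐ[ℚ] ℂ) := (Nat.card_eq_fintype_card).symm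
    _ ≤ Nat.card {x : ℝ | Polynomial.aeval x g = 0} := Nat.card_le_card_of_injective Φ hΦinj
    _ = Set.ncard {x : ℝ | Polynomial.aeval x g = 0} := Nat.card_coe_set_eq _
end
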